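/- Let d be a nonzero integer with gcd(d,6) = 1 and let Q = (a,b,c) ∈ ℤ³ be an integral binary quadratic form with b² − 4ac = d² and 6 | a. Then the equation Q(x,y) = 0 has exactly two solutions 𝔞₁ ≠ 𝔞₂ in the projective line P¹(ℚ), and there exists γ ∈ Γ₀(6) such that 𝔞₂ = (W₆·γ)·𝔞₁, where W₆ is the matrix [[0,−1],[6,0]] and GL₂(ℚ) acts on P¹(ℚ) by fractional linear transformations. -/

import Mathlib

/-- The value of the binary quadratic form `(a,b,c)` at a vector `v ∈ ℚ²`. -/
def QFval (a b c : ℤ) (v : Fin 2 → ℚ) : ℚ :=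
  a * (v 0) ^ 2 + b * (v 0) * (v 1) + c * (v 1) ^ 2

/-- The matrix `W₆ = [[0,-1],[6,0]]` over `ℚ`. -/
def W6 : Matrix (Fin 2) (Fin 2) ℚ := !![0, -1; 6, 0]

section aux

/-- vectors in ℚ² with zero cross product are parallel -/
lemma parallel2 (v w : Fin 2 → ℚ) (hv : v ≠ 0) (hw : w ≠ 0)
    (h : v 0 * w 1 - v 1 * w 0 = 0) : ∃ t : ℚ, t ≠ 0 ∧ v = t • w := by
  have hv' : v 0 ≠ 0 ∨ v 1 ≠ 0 := by
    by_contra hc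
    push_neg at hc
    exact hv (funext fun i => by fin_cases i <;> simp [hc.1, hc.2])
  by_cases hw0 : w 0 = 0
  · have hw1 : w 1 ≠ 0 := by
      intro h1
      exact hw (funext fun i => by fin_cases i <;> simp [hw0, h1])
    have hv0 : v 0 = 0 := by
      have := h
      rw [hw0] at this
      have h2 : v 0 * w 1 = 0 := by linarith
      rcases mul_eq_zero.1 h2 with h' | h'
      · exact h'
      · exact absurd h' hw1
    have hv1 : v 1 ≠ 0 := by rcases hv' with h' | h' <;> tauto
    refine ⟨v 1 / w 1, div_ne_zero hv1 hw1, funext fun i => ?_⟩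
    fin_cases i <;> simp [Pi.smul_apply, smul_eq_mul, hw0, hv0]
    field_simp
  · refine ⟨v 0 / w 0, ?_, funext fun i => ?_⟩
    · intro ht
      have hv0 : v 0 = 0 := by
        field_simp at ht
        simpa using ht
      have hv1 : v 1 = 0 := by
        rw [hv0] at h
        simp at h
        rcases h with h' | h'
        · exact h'
        · exact absurd h' hw0
      rcases hv' with h' | h' <;> tauto
    · fin_cases i <;> simp [Pi.smul_apply, smul_eq_mul]
      · field_simp
      · field_simp
        linarith [h]

lemma cong6 (m R : ℤ) (h2 : (2:ℤ) ∣ m → (2:ℤ) ∣ R) (h3 : (3:ℤ) ∣ m → (3:ℤ) ∣ R) :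
    ∃ t : ℤ, 6 ∣ R - t * m := by
  refine ⟨7 * R * m, ?_⟩
  have key : R - 7 * R * m * m = R * (1 - 7 * m ^ 2) := by ring
  have h2' : (2:ℤ) ∣ R - 7 * R * m * m := by
    obtain ⟨k, r2, hm, hr⟩ : ∃ k r2 : ℤ, m = 2 * k + r2 ∧ (r2 = 0 ∨ r2 = 1) :=
      ⟨m / 2, m % 2, by omega, by omega⟩
    rcases hr with h' | h'
    · have hdm : (2:ℤ) ∣ m := ⟨k, by omega⟩
      have hdR := h2 hdm
      obtain ⟨j, hj⟩ := hdR
      exact ⟨j - 7 * j * m * m, by rw [hj]; ring⟩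
    · subst h'
      refine ⟨R * (-3 - 14 * k ^ 2 - 14 * k), ?_⟩
      rw [hm]; ring
  have h3' : (3:ℤ) ∣ R - 7 * R * m * m := by
    obtain ⟨k, r3, hm, hr⟩ : ∃ k r3 : ℤ, m = 3 * k + r3 ∧ (r3 = 0 ∨ r3 = 1 ∨ r3 = 2) :=
      ⟨m / 3, m % 3, by omega, by omega⟩
    rcases hr with h' | h' | h'
    · have hdm : (3:ℤ) ∣ m := ⟨k, by omega⟩
      obtain ⟨j, hj⟩ := h3 hdm
      exact ⟨j - 7 * j * m * m, by rw [hj]; ring⟩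
    · subst h'
      exact ⟨R * (-2 - 21 * k ^ 2 - 14 * k), by rw [hm]; ring⟩
    · subst h'
      exact ⟨R * (-9 - 21 * k ^ 2 - 28 * k), by rw [hm]; ring⟩
  have hco : IsCoprime (2:ℤ) 3 := ⟨-1, 1, by norm_num⟩
  have := hco.mul_dvd h2' h3'
  norm_num at this
  exact this

lemma orbit6 (x y X Y : ℤ) (hv : IsCoprime x y) (hw : IsCoprime X Y)
    (h2 : ((2:ℤ) ∣ y ↔ (2:ℤ) ∣ Y)) (h3 : ((3:ℤ) ∣ y ↔ (3:ℤ) ∣ Y)) :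
    ∃ p q r s : ℤ, p * s - q * r = 1 ∧ 6 ∣ r ∧ p * x + q * y = X ∧ r * x + s * y = Y := by
  obtain ⟨z, u, hzu⟩ := hv
  obtain ⟨Z, U, hZU⟩ := hw
  have prime2 : Prime (2:ℤ) := Int.prime_two
  have prime3 : Prime (3:ℤ) := Int.prime_three
  obtain ⟨t, ht⟩ : ∃ t : ℤ, 6 ∣ (Y * z - Z * y) - t * (Y * y) := by
    apply cong6
    · intro hdm
      rcases prime2.dvd_mul.1 hdm with h' | h'
      · exact dvd_sub (Dvd.dvd.mul_right h' z) (Dvd.dvd.mul_left (h2.2 h') Z)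
      · exact dvd_sub (Dvd.dvd.mul_right (h2.1 h') z) (Dvd.dvd.mul_left h' Z)
    · intro hdm
      rcases prime3.dvd_mul.1 hdm with h' | h'
      · exact dvd_sub (Dvd.dvd.mul_right h' z) (Dvd.dvd.mul_left (h3.2 h') Z)
      · exact dvd_sub (Dvd.dvd.mul_right (h3.1 h') z) (Dvd.dvd.mul_left h' Z)
  refine ⟨X * z + U * y - t * X * y, X * u - U * x + t * X * x,
          Y * z - Z * y - t * Y * y, Y * u + Z * x + t * Y * x, ?_, ?_, ?_, ?_⟩
  · have : (X * z + U * y - t * X * y) * (Y * u + Z * x + t * Y * x)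
        - (X * u - U * x + t * X * x) * (Y * z - Z * y - t * Y * y)
        = (Z * X + U * Y) * (z * x + u * y) := by ring
    rw [this, hzu, hZU]; norm_num
  · have : Y * z - Z * y - t * Y * y = (Y * z - Z * y) - t * (Y * y) := by ring
    rw [this]; exact ht
  · have : (X * z + U * y - t * X * y) * x + (X * u - U * x + t * X * x) * y
        = X * (z * x + u * y) := by ring
    rw [this, hzu]; ring
  · have : (Y * z - Z * y - t * Y * y) * x + (Y * u + Z * x + t * Y * x) * y
        = Y * (z * x + u * y) := by ring
    rw [this, hzu]; ring



/-- A form of square discriminant factors over ℤ (needs d odd here). -/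
lemma factorQF (a b c d : ℤ) (hdisc : b ^ 2 - 4 * a * c = d ^ 2) (hd2 : ¬ (2:ℤ) ∣ d) :
    ∃ a1 b1 a2 b2 : ℤ, a = a1 * a2 ∧ b = a1 * b2 + b1 * a2 ∧ c = b1 * b2 := by
  by_cases hc : c = 0
  · exact ⟨1, 0, a, b, by ring, by ring, by rw [hc]; ring⟩
  by_cases ha : a = 0
  · exact ⟨0, 1, b, c, by rw [ha]; ring, by ring, by ring⟩
  have hbodd : ¬ (2:ℤ) ∣ b := by
    intro h2b
    apply hd2
    apply Int.prime_two.dvd_of_dvd_pow (n := 2)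
    obtain ⟨k, hk⟩ := h2b
    exact ⟨2 * k ^ 2 - 2 * a * c, by rw [← hdisc, hk]; ring⟩
  obtain ⟨u, v, hbuv, hduv⟩ : ∃ u v : ℤ, b = u + v ∧ d = u - v := by
    refine ⟨(b + d) / 2, (b - d) / 2, ?_, ?_⟩ <;> omega
  have huv : u * v = a * c := by
    have h := hdisc
    rw [hbuv, hduv] at h
    have h4 : 4 * (u * v) = 4 * (a * c) := by linear_combination h
    omega
  set g : ℤ := (Int.gcd a v : ℤ) with hg
  have hgpos : 0 < Int.gcd a v := Int.gcd_pos_of_ne_zero_left v ha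
  have hgne : g ≠ 0 := by
    rw [hg]
    exact_mod_cast hgpos.ne'
  obtain ⟨a', ha'⟩ : g ∣ a := Int.gcd_dvd_left a v
  obtain ⟨v', hv'⟩ : g ∣ v := Int.gcd_dvd_right a v
  have hcop : IsCoprime a' v' := by
    rw [Int.isCoprime_iff_gcd_eq_one]
    have e1 : a / g = a' := by rw [ha']; exact Int.mul_ediv_cancel_left _ hgne
    have e2 : v / g = v' := by rw [hv']; exact Int.mul_ediv_cancel_left _ hgne
    rw [← e1, ← e2]
    exact Int.gcd_div_gcd_div_gcd hgpos
  have ha'ne : a' ≠ 0 := by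
    intro h0
    exact ha (by rw [ha', h0]; ring)
  have huv' : u * v' = a' * c := by
    have h2 : g * (u * v') = g * (a' * c) := by
      have h3 : u * (g * v') = (g * a') * c := by rw [← hv', ← ha']; exact huv
      linear_combination h3
    exact mul_left_cancel₀ hgne h2
  obtain ⟨u', hu'⟩ : a' ∣ u := hcop.dvd_of_dvd_mul_right ⟨c, huv'⟩
  refine ⟨a', v', g, u', by rw [ha']; ring, by rw [hbuv, hu', hv']; ring, ?_⟩
  have h5 : a' * (v' * u') = a' * c := by
    rw [hu'] at huv'
    linear_combination huv'
  have := mul_left_cancel₀ ha'ne h5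
  linarith

/-- Cusp-invariant matching: `p ∣ a1 ↔ p ∣ Y₂` where `Y₂ = 6*b2/gcd(a2, 6*b2)`. -/
lemma matchQF (p : ℤ) (hp : Prime p) (hp6 : p ∣ 6) (hpp : ¬ p * p ∣ 6)
    (a1 b1 a2 b2 g2 X2 Y2 : ℤ)
    (hpe : ¬ p ∣ (a1 * b2 - b1 * a2)) (hpa : p ∣ a1 * a2)
    (hX : a2 = g2 * X2) (hY : 6 * b2 = g2 * Y2) (hcop : IsCoprime X2 Y2) :
    (p ∣ a1 ↔ p ∣ Y2) := by
  by_cases hpa1 : p ∣ a1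
  · simp only [hpa1, true_iff]
    have hpa2 : ¬ p ∣ a2 := by
      intro h'
      exact hpe (dvd_sub (hpa1.mul_right b2) (h'.mul_left b1))
    have hpg2 : ¬ p ∣ g2 := fun h' => hpa2 (hX ▸ h'.mul_right X2)
    have : p ∣ g2 * Y2 := hY ▸ hp6.mul_right b2
    rcases hp.dvd_mul.1 this with h' | h'
    · exact absurd h' hpg2
    · exact h'
  · simp only [hpa1, false_iff]
    intro hpY
    have hpa2 : p ∣ a2 := by
      rcases hp.dvd_mul.1 hpa with h' | h'
      · exact absurd h' hpa1
      · exact h'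
    have hpX : ¬ p ∣ X2 := by
      intro h'
      obtain ⟨s, t, hst⟩ := hcop
      have : p ∣ 1 := hst ▸ dvd_add (h'.mul_left s) (hpY.mul_left t)
      exact hp.not_unit (isUnit_of_dvd_one this)
    have hpg2 : p ∣ g2 := by
      rcases hp.dvd_mul.1 (hX ▸ hpa2) with h' | h'
      · exact h'
      · exact absurd h' hpX
    obtain ⟨k, hk⟩ := hp6
    have hpk : ¬ p ∣ k := by
      intro h'
      exact hpp (by rw [hk]; exact mul_dvd_mul_left p h')
    have hpp6b2 : p * p ∣ p * (k * b2) := by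
      have h1 : p * p ∣ g2 * Y2 := mul_dvd_mul hpg2 hpY
      have h2 : g2 * Y2 = p * (k * b2) := by rw [← hY, hk]; ring
      rwa [h2] at h1
    have hkb2 : p ∣ k * b2 := (mul_dvd_mul_iff_left hp.ne_zero).1 hpp6b2
    rcases hp.dvd_mul.1 hkb2 with h' | h'
    · exact hpk h'
    · exact hpe (dvd_sub (h'.mul_left a1) (hpa2.mul_left b1))

lemma mulVec2 (A : Matrix (Fin 2) (Fin 2) ℚ) (v : Fin 2 → ℚ) :
    A.mulVec v = ![A 0 0 * v 0 + A 0 1 * v 1, A 1 0 * v 0 + A 1 1 * v 1] := by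
  funext i
  fin_cases i <;> simp [Matrix.mulVec, dotProduct, Fin.sum_univ_two]

/-- extract primitive part w.r.t. gcd -/
lemma primpart (m n : ℤ) (hmn : ¬ (m = 0 ∧ n = 0)) :
    ∃ (g m' n' : ℤ), 0 < g ∧ m = g * m' ∧ n = g * n' ∧ IsCoprime m' n' := by
  have hgpos : 0 < Int.gcd m n := Int.gcd_pos_iff.2 (by tauto)
  set g : ℤ := (Int.gcd m n : ℤ) with hg
  have hgne : g ≠ 0 := by rw [hg]; exact_mod_cast hgpos.ne'
  obtain ⟨m', hm'⟩ : g ∣ m := Int.gcd_dvd_left m n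
  obtain ⟨n', hn'⟩ : g ∣ n := Int.gcd_dvd_right m n
  refine ⟨g, m', n', by rw [hg]; exact_mod_cast hgpos, hm', hn', ?_⟩
  rw [Int.isCoprime_iff_gcd_eq_one]
  have e1 : m / g = m' := by rw [hm']; exact Int.mul_ediv_cancel_left _ hgne
  have e2 : n / g = n' := by rw [hn']; exact Int.mul_ediv_cancel_left _ hgne
  rw [← e1, ← e2]
  exact Int.gcd_div_gcd_div_gcd hgpos

theorem endpoints_related_by_W6 (d : ℤ) (hd : d ≠ 0) (hd6 : Int.gcd d 6 = 1)
    (a b c : ℤ) (hdisc : b ^ 2 - 4 * a * c = d ^ 2) (ha : 6 ∣ a) :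
    ∃ p₁ p₂ : Projectivization ℚ (Fin 2 → ℚ), p₁ ≠ p₂ ∧
      (∀ p : Projectivization ℚ (Fin 2 → ℚ), QFval a b c p.rep = 0 ↔ p = p₁ ∨ p = p₂) ∧
      ∃ γ : Matrix.SpecialLinearGroup (Fin 2) ℤ, 6 ∣ γ.1 1 0 ∧
        ∀ (v : Fin 2 → ℚ) (hv : v ≠ 0)
          (hw : (W6 * (γ.1.map (Int.cast : ℤ → ℚ))).mulVec v ≠ 0),
          Projectivization.mk ℚ v hv = p₁ →
            Projectivization.mk ℚ ((W6 * (γ.1.map (Int.cast : ℤ → ℚ))).mulVec v) hw = p₂ := by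
  have hcopd : IsCoprime d (6:ℤ) := Int.isCoprime_iff_gcd_eq_one.2 hd6
  have hd2 : ¬ (2:ℤ) ∣ d := by
    intro h
    obtain ⟨s, t, hst⟩ := hcopd
    have h1 : (2:ℤ) ∣ 1 := hst ▸ dvd_add (h.mul_left s) (⟨t * 3, by ring⟩)
    norm_num at h1
  have hd3 : ¬ (3:ℤ) ∣ d := by
    intro h
    obtain ⟨s, t, hst⟩ := hcopd
    have h1 : (3:ℤ) ∣ 1 := hst ▸ dvd_add (h.mul_left s) (⟨t * 2, by ring⟩)
    norm_num at h1
  obtain ⟨a1, b1, a2, b2, hA, hB, hC⟩ := factorQF a b c d hdisc hd2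
  have he2 : (a1 * b2 - b1 * a2) ^ 2 = d ^ 2 := by
    have h := hdisc
    rw [hA, hB, hC] at h
    linear_combination h
  have hed : a1 * b2 - b1 * a2 = d ∨ a1 * b2 - b1 * a2 = -d := by
    have h0 : (a1 * b2 - b1 * a2 - d) * (a1 * b2 - b1 * a2 + d) = 0 := by linear_combination he2
    rcases mul_eq_zero.1 h0 with h' | h'
    · left; linarith
    · right; linarith
  have hee : a1 * b2 - b1 * a2 ≠ 0 := by
    intro h0
    rw [h0] at he2
    exact hd (by nlinarith [sq_nonneg d])
  have he2' : ¬ (2:ℤ) ∣ (a1 * b2 - b1 * a2) := by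
    rcases hed with h' | h' <;> rw [h'] <;> simp [hd2]
  have he3' : ¬ (3:ℤ) ∣ (a1 * b2 - b1 * a2) := by
    rcases hed with h' | h' <;> rw [h'] <;> simp [hd3]
  have hu₁ : (![-(b1:ℚ), (a1:ℚ)] : Fin 2 → ℚ) ≠ 0 := by
    intro h0
    apply hee
    have h1 : -(b1:ℚ) = 0 := congrFun h0 0
    have h2 : (a1:ℚ) = 0 := congrFun h0 1
    have hb1 : b1 = 0 := by exact_mod_cast neg_eq_zero.1 h1
    have ha1 : a1 = 0 := by exact_mod_cast h2
    rw [hb1, ha1]; ring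
  have hu₂ : (![-(b2:ℚ), (a2:ℚ)] : Fin 2 → ℚ) ≠ 0 := by
    intro h0
    apply hee
    have h1 : -(b2:ℚ) = 0 := congrFun h0 0
    have h2 : (a2:ℚ) = 0 := congrFun h0 1
    have hb2 : b2 = 0 := by exact_mod_cast neg_eq_zero.1 h1
    have ha2 : a2 = 0 := by exact_mod_cast h2
    rw [hb2, ha2]; ring
  have key : ∀ w : Fin 2 → ℚ, QFval a b c w
      = ((a1:ℚ) * w 0 + (b1:ℚ) * w 1) * ((a2:ℚ) * w 0 + (b2:ℚ) * w 1) := by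
    intro w
    have cA : (a:ℚ) = (a1:ℚ) * (a2:ℚ) := by exact_mod_cast congrArg (fun n : ℤ => (n:ℚ)) hA
    have cB : (b:ℚ) = (a1:ℚ) * (b2:ℚ) + (b1:ℚ) * (a2:ℚ) := by
      exact_mod_cast congrArg (fun n : ℤ => (n:ℚ)) hB
    have cC : (c:ℚ) = (b1:ℚ) * (b2:ℚ) := by exact_mod_cast congrArg (fun n : ℤ => (n:ℚ)) hC
    simp only [QFval]
    rw [cA, cB, cC]; ring
  have claim1 : ∀ (w : Fin 2 → ℚ) (hw0 : w ≠ 0),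
      ((a1:ℚ) * w 0 + (b1:ℚ) * w 1 = 0) ↔
        Projectivization.mk ℚ w hw0 = Projectivization.mk ℚ _ hu₁ := by
    intro w hw0
    constructor
    · intro h0
      have hcross : w 0 * (![-(b1:ℚ), (a1:ℚ)] : Fin 2 → ℚ) 1
          - w 1 * (![-(b1:ℚ), (a1:ℚ)] : Fin 2 → ℚ) 0 = 0 := by
        simp only [Matrix.cons_val_one, Matrix.head_cons, Matrix.cons_val_zero]
        linear_combination h0
      obtain ⟨t, ht, hwt⟩ := parallel2 w _ hw0 hu₁ hcross
      rw [Projectivization.mk_eq_mk_iff]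
      exact ⟨Units.mk0 t ht, by rw [Units.smul_def]; exact hwt.symm⟩
    · intro h0
      obtain ⟨t, ht⟩ := (Projectivization.mk_eq_mk_iff ℚ _ _ hw0 hu₁).1 h0
      have h1 : w 0 = (t:ℚ) * (-(b1:ℚ)) := by rw [← ht]; simp [Units.smul_def]
      have h2 : w 1 = (t:ℚ) * (a1:ℚ) := by rw [← ht]; simp [Units.smul_def]
      rw [h1, h2]; ring
  have claim2 : ∀ (w : Fin 2 → ℚ) (hw0 : w ≠ 0),
      ((a2:ℚ) * w 0 + (b2:ℚ) * w 1 = 0) ↔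
        Projectivization.mk ℚ w hw0 = Projectivization.mk ℚ _ hu₂ := by
    intro w hw0
    constructor
    · intro h0
      have hcross : w 0 * (![-(b2:ℚ), (a2:ℚ)] : Fin 2 → ℚ) 1
          - w 1 * (![-(b2:ℚ), (a2:ℚ)] : Fin 2 → ℚ) 0 = 0 := by
        simp only [Matrix.cons_val_one, Matrix.head_cons, Matrix.cons_val_zero]
        linear_combination h0
      obtain ⟨t, ht, hwt⟩ := parallel2 w _ hw0 hu₂ hcross
      rw [Projectivization.mk_eq_mk_iff]
      exact ⟨Units.mk0 t ht, by rw [Units.smul_def]; exact hwt.symm⟩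
    · intro h0
      obtain ⟨t, ht⟩ := (Projectivization.mk_eq_mk_iff ℚ _ _ hw0 hu₂).1 h0
      have h1 : w 0 = (t:ℚ) * (-(b2:ℚ)) := by rw [← ht]; simp [Units.smul_def]
      have h2 : w 1 = (t:ℚ) * (a2:ℚ) := by rw [← ht]; simp [Units.smul_def]
      rw [h1, h2]; ring
  refine ⟨Projectivization.mk ℚ _ hu₁, Projectivization.mk ℚ _ hu₂, ?_, ?_, ?_⟩
  · intro h0
    obtain ⟨t, ht⟩ := (Projectivization.mk_eq_mk_iff ℚ _ _ hu₁ hu₂).1 h0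
    have h1 : (t:ℚ) * (-(b2:ℚ)) = -(b1:ℚ) := by
      have := congrFun ht 0; simpa [Units.smul_def] using this
    have h2 : (t:ℚ) * (a2:ℚ) = (a1:ℚ) := by
      have := congrFun ht 1; simpa [Units.smul_def] using this
    apply hee
    have h3 : ((a1 * b2 - b1 * a2 : ℤ) : ℚ) = 0 := by
      push_cast
      rw [← h2]
      linear_combination (-(a2:ℚ)) * h1
    exact_mod_cast h3
  · intro P
    have h1 := claim1 P.rep P.rep_nonzero
    have h2 := claim2 P.rep P.rep_nonzero
    rw [Projectivization.mk_rep] at h1 h2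
    rw [key, mul_eq_zero, h1, h2]
  · have hab1 : ¬ (a1 = 0 ∧ b1 = 0) := by
      rintro ⟨h1', h2'⟩; exact hee (by rw [h1', h2']; ring)
    have hab2 : ¬ (a2 = 0 ∧ 6 * b2 = 0) := by
      rintro ⟨h1', h2'⟩
      exact hee (by rw [h1', show b2 = 0 by omega]; ring)
    obtain ⟨g1, A1, B1, hg1pos, ha1, hb1, hcop1⟩ := primpart a1 b1 hab1
    obtain ⟨g2, X2, Y2, hg2pos, hX, hY, hcop2⟩ := primpart a2 (6 * b2) hab2
    have hd1 : g1 ∣ a1 := ⟨A1, ha1⟩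
    have hd2' : g1 ∣ b1 := ⟨B1, hb1⟩
    have hg1dvde : g1 ∣ a1 * b2 - b1 * a2 := dvd_sub (hd1.mul_right b2) (hd2'.mul_right a2)
    have step2 : (2:ℤ) ∣ A1 ↔ (2:ℤ) ∣ a1 := by
      constructor
      · intro h'; exact ha1 ▸ h'.mul_left g1
      · intro h'
        rcases Int.prime_two.dvd_mul.1 (ha1 ▸ h') with h'' | h''
        · exact absurd (h''.trans hg1dvde) he2'
        · exact h''
    have step3 : (3:ℤ) ∣ A1 ↔ (3:ℤ) ∣ a1 := by
      constructor
      · intro h'; exact ha1 ▸ h'.mul_left g1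
      · intro h'
        rcases Int.prime_three.dvd_mul.1 (ha1 ▸ h') with h'' | h''
        · exact absurd (h''.trans hg1dvde) he3'
        · exact h''
    have hpa2 : (2:ℤ) ∣ a1 * a2 := hA ▸ (dvd_trans ⟨3, by norm_num⟩ ha)
    have hpa3 : (3:ℤ) ∣ a1 * a2 := hA ▸ (dvd_trans ⟨2, by norm_num⟩ ha)
    have match2 := matchQF 2 Int.prime_two ⟨3, by norm_num⟩ (by norm_num)
      a1 b1 a2 b2 g2 X2 Y2 he2' hpa2 hX hY hcop2
    have match3 := matchQF 3 Int.prime_three ⟨2, by norm_num⟩ (by norm_num)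
      a1 b1 a2 b2 g2 X2 Y2 he3' hpa3 hX hY hcop2
    obtain ⟨p, q, r, s, hdet, h6r, hXeq, hYeq⟩ :=
      orbit6 (-B1) A1 X2 Y2 (hcop1.symm.neg_left) hcop2
        (step2.trans match2) (step3.trans match3)
    refine ⟨⟨!![p, q; r, s], by rw [Matrix.det_fin_two_of]; linarith⟩, by simpa using h6r, ?_⟩
    intro v hv hw hmk
    obtain ⟨t, ht⟩ := (Projectivization.mk_eq_mk_iff ℚ _ _ hv hu₁).1 hmk
    have hv0 : v 0 = (t:ℚ) * (-(b1:ℚ)) := by rw [← ht]; simp [Units.smul_def]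
    have hv1 : v 1 = (t:ℚ) * (a1:ℚ) := by rw [← ht]; simp [Units.smul_def]
    have ca1 : (a1:ℚ) = (g1:ℚ) * (A1:ℚ) := by exact_mod_cast congrArg (fun n : ℤ => (n:ℚ)) ha1
    have cb1 : (b1:ℚ) = (g1:ℚ) * (B1:ℚ) := by exact_mod_cast congrArg (fun n : ℤ => (n:ℚ)) hb1
    have cX : (a2:ℚ) = (g2:ℚ) * (X2:ℚ) := by exact_mod_cast congrArg (fun n : ℤ => (n:ℚ)) hX
    have cY : (6:ℚ) * (b2:ℚ) = (g2:ℚ) * (Y2:ℚ) := by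
      exact_mod_cast congrArg (fun n : ℤ => (n:ℚ)) hY
    have cXeq : (p:ℚ) * (-(B1:ℚ)) + (q:ℚ) * (A1:ℚ) = (X2:ℚ) := by
      exact_mod_cast congrArg (fun n : ℤ => (n:ℚ)) hXeq
    have cYeq : (r:ℚ) * (-(B1:ℚ)) + (s:ℚ) * (A1:ℚ) = (Y2:ℚ) := by
      exact_mod_cast congrArg (fun n : ℤ => (n:ℚ)) hYeq
    have e00 : ((!![p, q; r, s] : Matrix (Fin 2) (Fin 2) ℤ).map (Int.cast : ℤ → ℚ)) 0 0 = (p:ℚ) := by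
      simp [Matrix.map_apply]
    have e01 : ((!![p, q; r, s] : Matrix (Fin 2) (Fin 2) ℤ).map (Int.cast : ℤ → ℚ)) 0 1 = (q:ℚ) := by
      simp [Matrix.map_apply]
    have e10 : ((!![p, q; r, s] : Matrix (Fin 2) (Fin 2) ℤ).map (Int.cast : ℤ → ℚ)) 1 0 = (r:ℚ) := by
      simp [Matrix.map_apply]
    have e11 : ((!![p, q; r, s] : Matrix (Fin 2) (Fin 2) ℤ).map (Int.cast : ℤ → ℚ)) 1 1 = (s:ℚ) := by
      simp [Matrix.map_apply]
    have hGv : ((!![p, q; r, s] : Matrix (Fin 2) (Fin 2) ℤ).map (Int.cast : ℤ → ℚ)).mulVec v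
        = ![(t:ℚ) * (g1:ℚ) * (X2:ℚ), (t:ℚ) * (g1:ℚ) * (Y2:ℚ)] := by
      have c0 : (p:ℚ) * ((t:ℚ) * -(b1:ℚ)) + (q:ℚ) * ((t:ℚ) * (a1:ℚ))
          = (t:ℚ) * (g1:ℚ) * (X2:ℚ) := by rw [ca1, cb1, ← cXeq]; ring
      have c1 : (r:ℚ) * ((t:ℚ) * -(b1:ℚ)) + (s:ℚ) * ((t:ℚ) * (a1:ℚ))
          = (t:ℚ) * (g1:ℚ) * (Y2:ℚ) := by rw [ca1, cb1, ← cYeq]; ring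
      rw [mulVec2, e00, e01, e10, e11, hv0, hv1, c0, c1]
    have hWfull : (W6 * ((!![p, q; r, s] : Matrix (Fin 2) (Fin 2) ℤ).map (Int.cast : ℤ → ℚ))).mulVec v
        = ![-((t:ℚ) * (g1:ℚ) * (Y2:ℚ)), 6 * ((t:ℚ) * (g1:ℚ) * (X2:ℚ))] := by
      rw [← Matrix.mulVec_mulVec, hGv, mulVec2]
      have w00 : W6 0 0 = 0 := rfl
      have w01 : W6 0 1 = -1 := rfl
      have w10 : W6 1 0 = 6 := rfl
      have w11 : W6 1 1 = 0 := rfl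
      rw [w00, w01, w10, w11]
      simp only [Matrix.cons_val_zero, Matrix.cons_val_one, Matrix.head_cons]
      have f0 : (0:ℚ) * ((t:ℚ) * (g1:ℚ) * (X2:ℚ)) + (-1:ℚ) * ((t:ℚ) * (g1:ℚ) * (Y2:ℚ))
          = -((t:ℚ) * (g1:ℚ) * (Y2:ℚ)) := by ring
      have f1 : (6:ℚ) * ((t:ℚ) * (g1:ℚ) * (X2:ℚ)) + (0:ℚ) * ((t:ℚ) * (g1:ℚ) * (Y2:ℚ))
          = 6 * ((t:ℚ) * (g1:ℚ) * (X2:ℚ)) := by ring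
      rw [f0, f1]
    have hg1q : (g1:ℚ) ≠ 0 := by
      have : g1 ≠ 0 := hg1pos.ne'
      exact_mod_cast this
    have hg2q : (g2:ℚ) ≠ 0 := by
      have : g2 ≠ 0 := hg2pos.ne'
      exact_mod_cast this
    have hs0 : (t:ℚ) * (g1:ℚ) * 6 / (g2:ℚ) ≠ 0 := by
      apply div_ne_zero _ hg2q
      exact mul_ne_zero (mul_ne_zero t.ne_zero hg1q) (by norm_num)
    rw [Projectivization.mk_eq_mk_iff]
    refine ⟨Units.mk0 _ hs0, ?_⟩
    rw [Units.smul_def, hWfull]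
    have hsm : ((t:ℚ) * (g1:ℚ) * 6 / (g2:ℚ)) • (![-(b2:ℚ), (a2:ℚ)] : Fin 2 → ℚ)
        = ![((t:ℚ) * (g1:ℚ) * 6 / (g2:ℚ)) * -(b2:ℚ), ((t:ℚ) * (g1:ℚ) * 6 / (g2:ℚ)) * (a2:ℚ)] := by
      funext i
      fin_cases i <;> simp
    have z0 : ((t:ℚ) * (g1:ℚ) * 6 / (g2:ℚ)) * -(b2:ℚ) = -((t:ℚ) * (g1:ℚ) * (Y2:ℚ)) := by
      rw [div_mul_eq_mul_div, div_eq_iff hg2q]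
      linear_combination (-(t:ℚ) * (g1:ℚ)) * cY
    have z1 : ((t:ℚ) * (g1:ℚ) * 6 / (g2:ℚ)) * (a2:ℚ) = 6 * ((t:ℚ) * (g1:ℚ) * (X2:ℚ)) := by
      rw [div_mul_eq_mul_div, div_eq_iff hg2q]
      linear_combination (6 * (t:ℚ) * (g1:ℚ)) * cX
    rw [Units.val_mk0, hsm, z0, z1]
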